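/- Let Q be the coefficient matrix of a system of s pairwise comparisons on v treatments, with every degree d_i ≥ 1. Then for every design w on v treatments, tr(Qᵀ diag(w)⁻¹ Q) = Σ_{i=1}^v w_i⁻¹ d_i, and this quantity is minimized over all designs uniquely at the design w* with w*_i = √d_i / Σ_{j=1}^v √d_j. -/

import Mathlib

open Matrix

theorem stmt_7 (v s : ℕ) (Q : Matrix (Fin v) (Fin s) ℝ) (a b : Fin s → Fin v)
    (hab : ∀ k, a k ≠ b k)
    (hQ : ∀ i k, Q i k = if i = a k then 1 else if i = b k then -1 else 0)
    (hd : ∀ i : Fin v, 1 ≤ (Finset.univ.filter fun k => Q i k ≠ 0).card) :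
    let d : Fin v → ℕ := fun i => (Finset.univ.filter fun k => Q i k ≠ 0).card
    let wstar : Fin v → ℝ := fun i => Real.sqrt (d i) / ∑ j, Real.sqrt (d j)
    (∀ w : Fin v → ℝ, (∀ i, 0 < w i) → ∑ i, w i = 1 →
        (Qᵀ * (Matrix.diagonal w)⁻¹ * Q).trace = ∑ i, (w i)⁻¹ * (d i : ℝ)) ∧
    (∀ w : Fin v → ℝ, (∀ i, 0 < w i) → ∑ i, w i = 1 → w ≠ wstar →
        (Qᵀ * (Matrix.diagonal w)⁻¹ * Q).trace
          > (Qᵀ * (Matrix.diagonal wstar)⁻¹ * Q).trace) := by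
  intro d wstar
  have hsq : ∀ i k, Q i k * Q i k = if Q i k ≠ 0 then (1:ℝ) else 0 := by
    intro i k
    rw [hQ i k]
    split_ifs <;> simp_all
  have htr : ∀ u : Fin v → ℝ, (Qᵀ * Matrix.diagonal u * Q).trace = ∑ i, u i * d i := by
    intro u
    rw [Matrix.trace]
    simp only [Matrix.diag_apply, Matrix.mul_apply, Matrix.diagonal_apply,
      Matrix.transpose_apply, mul_ite, mul_zero, ite_mul, zero_mul,
      Finset.sum_ite_eq, Finset.sum_ite_eq', Finset.mem_univ, if_true]
    rw [Finset.sum_comm]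
    refine Finset.sum_congr rfl fun i _ => ?_
    have h1 : ∀ k : Fin s, Q i k * u i * Q i k = u i * (Q i k * Q i k) := fun k => by ring
    simp only [h1, hsq, ← Finset.mul_sum, Finset.sum_boole]
    rfl
  have hdinv : ∀ u : Fin v → ℝ, (∀ i, 0 < u i) →
      (Matrix.diagonal u)⁻¹ = Matrix.diagonal (fun i => (u i)⁻¹) := by
    intro u hu
    apply Matrix.inv_eq_right_inv
    have h : (fun i => u i * (u i)⁻¹) = fun _ => (1:ℝ) :=
      funext fun i => mul_inv_cancel₀ (hu i).ne'
    rw [Matrix.diagonal_mul_diagonal, h, Matrix.diagonal_one]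
  have part1 : ∀ w : Fin v → ℝ, (∀ i, 0 < w i) → ∑ i, w i = 1 →
      (Qᵀ * (Matrix.diagonal w)⁻¹ * Q).trace = ∑ i, (w i)⁻¹ * (d i : ℝ) := by
    intro w hw _
    rw [hdinv w hw, htr]
  refine ⟨part1, ?_⟩
  intro w hw hw1 hne
  have hx : ∃ i₀, w i₀ ≠ wstar i₀ := by
    by_contra h
    push_neg at h
    exact hne (funext h)
  obtain ⟨i₀, hi₀⟩ := hx
  haveI : Nonempty (Fin v) := ⟨i₀⟩
  set S : ℝ := ∑ j, Real.sqrt (d j) with hS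
  have hd1 : ∀ i, (1:ℝ) ≤ (d i : ℝ) := fun i => by exact_mod_cast hd i
  have hsd : ∀ i, 0 < Real.sqrt (d i) := fun i =>
    Real.sqrt_pos.mpr (lt_of_lt_of_le one_pos (hd1 i))
  have hSpos : 0 < S := Finset.sum_pos (fun i _ => hsd i) Finset.univ_nonempty
  have hws_pos : ∀ i, 0 < wstar i := fun i => div_pos (hsd i) hSpos
  have hws_sum : ∑ i, wstar i = 1 := by
    simp only [wstar, ← Finset.sum_div]
    exact div_self hSpos.ne'
  have hsqd : ∀ i, Real.sqrt (d i) * Real.sqrt (d i) = (d i : ℝ) := fun i =>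
    Real.mul_self_sqrt (Nat.cast_nonneg _)
  have habs1 : ∀ t T : ℝ, t ≠ 0 → T ≠ 0 → (t / T)⁻¹ * (t * t) = T * t := by
    intro t T ht hT; field_simp
  have habs2 : ∀ t u T : ℝ, u ≠ 0 →
      u⁻¹ * (t * t) = u * (t / u - T)^2 + 2 * T * t - T * T * u := by
    intro t u T hu; field_simp; ring
  have hval : ∑ i, (wstar i)⁻¹ * (d i : ℝ) = S * S := by
    have h : ∀ i : Fin v, (wstar i)⁻¹ * (d i : ℝ) = S * Real.sqrt (d i) := by
      intro i
      calc (wstar i)⁻¹ * (d i : ℝ)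
          = (Real.sqrt (d i) / S)⁻¹ * (Real.sqrt (d i) * Real.sqrt (d i)) := by
            rw [hsqd i]
        _ = S * Real.sqrt (d i) := habs1 _ _ (hsd i).ne' hSpos.ne'
    rw [Finset.sum_congr rfl fun i _ => h i, ← Finset.mul_sum]
  have key : ∑ i, (w i)⁻¹ * (d i : ℝ)
      = (∑ i, w i * (Real.sqrt (d i) / w i - S)^2) + S * S := by
    have hterm : ∀ i : Fin v, (w i)⁻¹ * (d i : ℝ)
        = w i * (Real.sqrt (d i) / w i - S)^2 + 2 * S * Real.sqrt (d i) - S * S * w i := by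
      intro i
      calc (w i)⁻¹ * (d i : ℝ)
          = (w i)⁻¹ * (Real.sqrt (d i) * Real.sqrt (d i)) := by rw [hsqd i]
        _ = _ := habs2 _ _ _ (hw i).ne'
    rw [Finset.sum_congr rfl fun i _ => hterm i]
    rw [Finset.sum_sub_distrib, Finset.sum_add_distrib, ← Finset.mul_sum, ← Finset.mul_sum,
      ← hS, hw1]
    ring
  have hposterm : 0 < ∑ i, w i * (Real.sqrt (d i) / w i - S)^2 := by
    refine Finset.sum_pos' (fun i _ => mul_nonneg (hw i).le (sq_nonneg _))
      ⟨i₀, Finset.mem_univ _, ?_⟩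
    have h2 : Real.sqrt (d i₀) / w i₀ - S ≠ 0 := by
      intro h
      apply hi₀
      have h3 : Real.sqrt (d i₀) / w i₀ = S := by linarith
      rw [div_eq_iff (hw i₀).ne'] at h3
      show w i₀ = Real.sqrt (d i₀) / S
      rw [eq_div_iff hSpos.ne', mul_comm]
      exact h3.symm
    exact mul_pos (hw i₀) (pow_two_pos_of_ne_zero h2)
  rw [part1 w hw hw1, part1 wstar hws_pos hws_sum, hval, key]
  linarith
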